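/- Let ab and a'b' be segments in ℝ² such that the midpoint of ab does not lie on a'b' and the midpoint of a'b' does not lie on ab. Let a''b'' be the translate of a'b' whose midpoint coincides with the midpoint of ab. Then d_H(ab, a''b'') < d_H(ab, a'b'). -/

import Mathlib

noncomputable abbrev E2 : Type := EuclideanSpace ℝ (Fin 2)

open Metric

/-! ### Auxiliary lemmas -/

lemma seg_compact (a b : E2) : IsCompact (segment ℝ a b) := by
  rw [segment_eq_image]
  exact isCompact_Icc.image (by fun_prop)

lemma seg_symm {a b z : E2} (hz : z ∈ segment ℝ a b) : a + b - z ∈ segment ℝ a b := by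
  obtain ⟨s, t, hs, ht, hst, rfl⟩ := hz
  refine ⟨t, s, ht, hs, by linarith, ?_⟩
  have h1 : s = 1 - t := by linarith
  subst h1
  module

lemma seg_translate_mem {a b x : E2} (v : E2) (h : x ∈ segment ℝ a b) :
    x + v ∈ segment ℝ (a + v) (b + v) := by
  obtain ⟨s, t, hs, ht, hst, rfl⟩ := h
  refine ⟨s, t, hs, ht, hst, ?_⟩
  have h1 : s = 1 - t := by linarith
  subst h1
  module

lemma infDist_seg_translate_le (x v a b : E2) :
    infDist (x + v) (segment ℝ (a + v) (b + v)) ≤ infDist x (segment ℝ a b) := by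
  obtain ⟨p, hp, hpd⟩ :=
    (seg_compact a b).exists_infDist_eq_dist ⟨a, left_mem_segment ℝ a b⟩ x
  calc infDist (x + v) (segment ℝ (a + v) (b + v)) ≤ dist (x + v) (p + v) :=
        infDist_le_dist_of_mem (seg_translate_mem v hp)
    _ = dist x p := by
        rw [dist_eq_norm, dist_eq_norm]
        congr 1
        abel
    _ = infDist x (segment ℝ a b) := hpd.symm

lemma infDist_seg_translate (x v a b : E2) :
    infDist (x + v) (segment ℝ (a + v) (b + v)) = infDist x (segment ℝ a b) := by
  refine le_antisymm (infDist_seg_translate_le x v a b) ?_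
  have h := infDist_seg_translate_le (x + v) (-v) (a + v) (b + v)
  simpa using h

lemma infDist_seg_reflect_le (x a b : E2) :
    infDist (a + b - x) (segment ℝ a b) ≤ infDist x (segment ℝ a b) := by
  obtain ⟨p, hp, hpd⟩ :=
    (seg_compact a b).exists_infDist_eq_dist ⟨a, left_mem_segment ℝ a b⟩ x
  calc infDist (a + b - x) (segment ℝ a b) ≤ dist (a + b - x) (a + b - p) :=
        infDist_le_dist_of_mem (seg_symm hp)
    _ = dist x p := by
        rw [dist_eq_norm, dist_eq_norm, ← norm_neg]
        congr 1
        abel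
    _ = infDist x (segment ℝ a b) := hpd.symm

lemma infDist_seg_reflect (x a b : E2) :
    infDist (a + b - x) (segment ℝ a b) = infDist x (segment ℝ a b) := by
  refine le_antisymm (infDist_seg_reflect_le x a b) ?_
  have h := infDist_seg_reflect_le (a + b - x) a b
  simpa using h

/-- distance to a convex set, restricted to a segment, is maximized at an endpoint. -/
lemma infDist_le_max {x a b : E2} (hx : x ∈ segment ℝ a b) (c d : E2) :
    infDist x (segment ℝ c d) ≤
      max (infDist a (segment ℝ c d)) (infDist b (segment ℝ c d)) := by
  obtain ⟨p, hp, hpd⟩ :=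
    (seg_compact c d).exists_infDist_eq_dist ⟨c, left_mem_segment ℝ c d⟩ a
  obtain ⟨q, hq, hqd⟩ :=
    (seg_compact c d).exists_infDist_eq_dist ⟨c, left_mem_segment ℝ c d⟩ b
  obtain ⟨s, t, hs, ht, hst, rfl⟩ := hx
  have hz : s • p + t • q ∈ segment ℝ c d := (convex_segment c d) hp hq hs ht hst
  have h1 : infDist (s • a + t • b) (segment ℝ c d) ≤ dist (s • a + t • b) (s • p + t • q) :=
    infDist_le_dist_of_mem hz
  have h2 : dist (s • a + t • b) (s • p + t • q) ≤ s * dist a p + t * dist b q := by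
    rw [dist_eq_norm, dist_eq_norm, dist_eq_norm]
    have he : s • a + t • b - (s • p + t • q) = s • (a - p) + t • (b - q) := by module
    rw [he]
    calc ‖s • (a - p) + t • (b - q)‖ ≤ ‖s • (a - p)‖ + ‖t • (b - q)‖ := norm_add_le _ _
      _ = s * ‖a - p‖ + t * ‖b - q‖ := by
          rw [norm_smul, norm_smul, Real.norm_eq_abs, Real.norm_eq_abs,
            abs_of_nonneg hs, abs_of_nonneg ht]
  have hM : s * dist a p + t * dist b q ≤
      max (infDist a (segment ℝ c d)) (infDist b (segment ℝ c d)) := by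
    have ha := le_max_left (dist a p) (dist b q)
    have hb := le_max_right (dist a p) (dist b q)
    calc s * dist a p + t * dist b q
        ≤ s * max (dist a p) (dist b q) + t * max (dist a p) (dist b q) := by
          gcongr
      _ = max (dist a p) (dist b q) := by rw [← add_mul, hst, one_mul]
      _ = max (infDist a (segment ℝ c d)) (infDist b (segment ℝ c d)) := by
          rw [hpd, hqd]
  linarith

/-- Key lemma: for a compact convex set `K` symmetric about `c`, if `c + v ∉ K`,
then shifting any point by `±v` strictly increases the maximal distance. -/
lemma key {K : Set E2} (hconv : Convex ℝ K) (hcomp : IsCompact K) (hne : K.Nonempty)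
    {c v : E2} (hsym : ∀ z ∈ K, c + c - z ∈ K) (hv : c + v ∉ K) (x : E2) :
    infDist x K < max (infDist (x + v) K) (infDist (x - v) K) := by
  by_contra hcon
  push_neg at hcon
  set R := infDist x K with hR
  obtain ⟨p, hp, hpd⟩ := hcomp.exists_infDist_eq_dist hne (x + v)
  obtain ⟨q, hq, hqd⟩ := hcomp.exists_infDist_eq_dist hne (x - v)
  set A := x + v - p with hA
  set B := x - v - q with hB
  have hAle : ‖A‖ ≤ R := by
    rw [hA, ← dist_eq_norm, ← hpd]
    exact le_trans (le_max_left _ _) hcon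
  have hBle : ‖B‖ ≤ R := by
    rw [hB, ← dist_eq_norm, ← hqd]
    exact le_trans (le_max_right _ _) hcon
  have hmid : (1/2 : ℝ) • p + (1/2 : ℝ) • q ∈ K :=
    hconv hp hq (by norm_num) (by norm_num) (by norm_num)
  have hRle : R ≤ dist x ((1/2 : ℝ) • p + (1/2 : ℝ) • q) := infDist_le_dist_of_mem hmid
  have hdist : dist x ((1/2 : ℝ) • p + (1/2 : ℝ) • q) = ‖A + B‖ / 2 := by
    rw [dist_eq_norm]
    have he : x - ((1/2 : ℝ) • p + (1/2 : ℝ) • q) = (1/2 : ℝ) • (A + B) := by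
      rw [hA, hB]; module
    rw [he, norm_smul, Real.norm_eq_abs, abs_of_pos (by norm_num : (0:ℝ) < 1/2)]
    ring
  have h2R : 2 * R ≤ ‖A + B‖ := by
    rw [hdist] at hRle; linarith
  have hpar := parallelogram_law_with_norm ℝ A B
  have hR0 : 0 ≤ R := infDist_nonneg
  have hABeq : A = B := by
    have h0 : ‖A - B‖ = 0 := by
      nlinarith [norm_nonneg (A - B), norm_nonneg A, norm_nonneg B, norm_nonneg (A + B)]
    exact sub_eq_zero.mp (norm_eq_zero.mp h0)
  have hpq : p = q + v + v := by
    have h' : x + v - p = x - v - q := hABeq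
    have : p = x + v - (x - v - q) := by rw [← h']; abel
    rw [this]; abel
  have hcq : c + c - q ∈ K := hsym q hq
  have hmem : (1/2 : ℝ) • p + (1/2 : ℝ) • (c + c - q) ∈ K :=
    hconv hp hcq (by norm_num) (by norm_num) (by norm_num)
  have he2 : (1/2 : ℝ) • p + (1/2 : ℝ) • (c + c - q) = c + v := by
    rw [hpq]; module
  rw [he2] at hmem
  exact hv hmem

/-- If neither midpoint lies on the other segment, recentering strictly decreases the
Hausdorff distance. -/
theorem hausdorff_dist_recenter_lt (a b a' b' : E2)
    (h₁ : midpoint ℝ a b ∉ segment ℝ a' b') (h₂ : midpoint ℝ a' b' ∉ segment ℝ a b)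
    (v : E2) (hv : midpoint ℝ a' b' + v = midpoint ℝ a b) :
    Metric.hausdorffDist (segment ℝ a b) (segment ℝ (a' + v) (b' + v)) <
      Metric.hausdorffDist (segment ℝ a b) (segment ℝ a' b') := by
  have hmab : midpoint ℝ a b + midpoint ℝ a b = a + b := midpoint_add_self ℝ a b
  have hmab' : midpoint ℝ a' b' + midpoint ℝ a' b' = a' + b' := midpoint_add_self ℝ a' b'
  have hsum : a' + b' + v + v = a + b := by
    calc a' + b' + v + v = (midpoint ℝ a' b' + v) + (midpoint ℝ a' b' + v) := by
          rw [← hmab']; abel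
      _ = midpoint ℝ a b + midpoint ℝ a b := by rw [hv]
      _ = a + b := hmab
  set S := segment ℝ a b with hS
  set T' := segment ℝ a' b' with hT'
  set T'' := segment ℝ (a' + v) (b' + v) with hT''
  set D := hausdorffDist S T' with hD
  -- finiteness
  have hfin : EMetric.hausdorffEdist S T' ≠ ⊤ :=
    hausdorffEdist_ne_top_of_nonempty_of_bounded ⟨a, left_mem_segment ℝ a b⟩
      ⟨a', left_mem_segment ℝ a' b'⟩ (seg_compact a b).isBounded (seg_compact a' b').isBounded
  have hfin' : EMetric.hausdorffEdist T' S ≠ ⊤ := by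
    unfold EMetric.hausdorffEdist at hfin ⊢
    rwa [EMetric.hausdorffEdist_comm] at hfin
  have da' : infDist a T' ≤ D := infDist_le_hausdorffDist_of_mem (left_mem_segment ℝ a b) hfin
  have db' : infDist b T' ≤ D := infDist_le_hausdorffDist_of_mem (right_mem_segment ℝ a b) hfin
  have da'' : infDist a' S ≤ D := by
    have h := infDist_le_hausdorffDist_of_mem (left_mem_segment ℝ a' b') hfin'
    rwa [hausdorffDist_comm] at h
  have db'' : infDist b' S ≤ D := by
    have h := infDist_le_hausdorffDist_of_mem (right_mem_segment ℝ a' b') hfin'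
    rwa [hausdorffDist_comm] at h
  -- symmetry of T'' about midpoint a b
  have hsymT'' : ∀ z ∈ T'', midpoint ℝ a b + midpoint ℝ a b - z ∈ T'' := by
    intro z hz
    have h := seg_symm hz
    have he : midpoint ℝ a b + midpoint ℝ a b - z = (a' + v) + (b' + v) - z := by
      rw [hmab, ← hsum]; abel
    rwa [he]
  have hsymS : ∀ z ∈ S, midpoint ℝ a b + midpoint ℝ a b - z ∈ S := by
    intro z hz
    have h := seg_symm hz
    rwa [hmab]
  -- non-membership facts
  have hnm'' : midpoint ℝ a b + v ∉ T'' := by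
    intro hmem
    apply h₁
    have h := seg_translate_mem (-v) hmem
    simpa using h
  have hnmS : midpoint ℝ a b + v ∉ S := by
    intro hmem
    apply h₂
    have h := hsymS _ hmem
    have he : midpoint ℝ a b + midpoint ℝ a b - (midpoint ℝ a b + v) = midpoint ℝ a' b' := by
      rw [← hv]; abel
    rwa [he] at h
  -- the four strict bounds
  have hne'' : T''.Nonempty := ⟨a' + v, left_mem_segment ℝ _ _⟩
  have hneS : S.Nonempty := ⟨a, left_mem_segment ℝ a b⟩
  have h1 : infDist a T'' < D := by
    have hkey := key (convex_segment (a' + v) (b' + v)) (seg_compact _ _) hne'' hsymT'' hnm'' a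
    have e1 : infDist (a + v) T'' = infDist a T' := infDist_seg_translate a v a' b'
    have e2 : infDist (a - v) T'' = infDist b T' := by
      have t1 : infDist ((a - v - v) + v) T'' = infDist (a - v - v) T' :=
        infDist_seg_translate (a - v - v) v a' b'
      have t2 : a - v - v + v = a - v := by abel
      rw [t2] at t1
      rw [t1]
      have t3 : a - v - v = a' + b' - b := by
        calc a - v - v = a + b - b - v - v := by abel
          _ = a' + b' + v + v - b - v - v := by rw [hsum]
          _ = a' + b' - b := by abel
      rw [t3, hT', infDist_seg_reflect b a' b']
    rw [e1, e2] at hkey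
    exact hkey.trans_le (max_le da' db')
  have h2 : infDist b T'' < D := by
    have hkey := key (convex_segment (a' + v) (b' + v)) (seg_compact _ _) hne'' hsymT'' hnm'' b
    have e1 : infDist (b + v) T'' = infDist b T' := infDist_seg_translate b v a' b'
    have e2 : infDist (b - v) T'' = infDist a T' := by
      have t1 : infDist ((b - v - v) + v) T'' = infDist (b - v - v) T' :=
        infDist_seg_translate (b - v - v) v a' b'
      have t2 : b - v - v + v = b - v := by abel
      rw [t2] at t1
      rw [t1]
      have t3 : b - v - v = a' + b' - a := by
        calc b - v - v = a + b - a - v - v := by abel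
          _ = a' + b' + v + v - a - v - v := by rw [hsum]
          _ = a' + b' - a := by abel
      rw [t3, hT', infDist_seg_reflect a a' b']
    rw [e1, e2] at hkey
    exact hkey.trans_le (max_le db' da')
  have h3 : infDist (a' + v) S < D := by
    have hkey := key (convex_segment a b) (seg_compact a b) hneS hsymS hnmS (a' + v)
    have e1 : infDist (a' + v + v) S = infDist b' S := by
      have t3 : a' + v + v = a + b - b' := by
        calc a' + v + v = a' + b' + v + v - b' := by abel
          _ = a + b - b' := by rw [hsum]
      rw [t3, hS, infDist_seg_reflect b' a b]
    have e2 : infDist (a' + v - v) S = infDist a' S := by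
      have t2 : a' + v - v = a' := by abel
      rw [t2]
    rw [e1, e2] at hkey
    exact hkey.trans_le (max_le db'' da'')
  have h4 : infDist (b' + v) S < D := by
    have hkey := key (convex_segment a b) (seg_compact a b) hneS hsymS hnmS (b' + v)
    have e1 : infDist (b' + v + v) S = infDist a' S := by
      have t3 : b' + v + v = a + b - a' := by
        calc b' + v + v = a' + b' + v + v - a' := by abel
          _ = a + b - a' := by rw [hsum]
      rw [t3, hS, infDist_seg_reflect a' a b]
    have e2 : infDist (b' + v - v) S = infDist b' S := by
      have t2 : b' + v - v = b' := by abel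
      rw [t2]
    rw [e1, e2] at hkey
    exact hkey.trans_le (max_le da'' db'')
  -- assemble
  set D0 := max (max (infDist a T'') (infDist b T''))
    (max (infDist (a' + v) S) (infDist (b' + v) S)) with hD0
  have hstep : hausdorffDist S T'' ≤ D0 := by
    apply hausdorffDist_le_of_infDist
    · exact le_trans infDist_nonneg (le_trans (le_max_left _ _) (le_max_left _ _))
    · intro x hx
      exact le_trans (infDist_le_max hx (a' + v) (b' + v)) (le_max_left _ _)
    · intro y hy
      exact le_trans (infDist_le_max hy a b) (le_max_right _ _)
  have hlt : D0 < D := max_lt (max_lt h1 h2) (max_lt h3 h4)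
  exact lt_of_le_of_lt hstep hlt
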